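/- Let λ, τ > 0 with λτ < 1, let T ∈ ℝ, and set φ = √(τ/λ) and ξ = (1 + √(λτ))/(1 − √(λτ)). Define h₂(t) = 1 + √(λτ)·(1 + ξ e^{2φ(T−t)})/(1 − ξ e^{2φ(T−t)}) for t ≤ T. Then the denominator 1 − ξ e^{2φ(T−t)} is nonzero for all t ≤ T, h₂(T) = 0, and h₂ is differentiable on (−∞, T] with h₂′(t) + (1 − h₂(t))²/λ − τ = 0 for all t ≤ T. -/

import Mathlib

theorem stmt13_aux (lam tau T φ ξ s : ℝ) (hlam : 0 < lam) (htau : 0 < tau)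
    (hlt : lam * tau < 1)
    (hs : s = Real.sqrt (lam * tau))
    (hφ : φ = Real.sqrt (tau / lam))
    (hξ : ξ = (1 + s) / (1 - s)) :
    (∀ t ≤ T, 1 - ξ * Real.exp (2 * φ * (T - t)) ≠ 0) ∧
    (1 + s * (1 + ξ * Real.exp (2 * φ * (T - T))) /
            (1 - ξ * Real.exp (2 * φ * (T - T))) = 0) ∧
    (∀ t ≤ T, DifferentiableAt ℝ (fun t =>
      1 + s * (1 + ξ * Real.exp (2 * φ * (T - t))) /
            (1 - ξ * Real.exp (2 * φ * (T - t)))) t ∧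
      deriv (fun t => 1 + s * (1 + ξ * Real.exp (2 * φ * (T - t))) /
            (1 - ξ * Real.exp (2 * φ * (T - t)))) t
        + (1 - (1 + s * (1 + ξ * Real.exp (2 * φ * (T - t))) /
            (1 - ξ * Real.exp (2 * φ * (T - t))))) ^ 2 / lam - tau = 0) := by
  have hlt0 : 0 < lam * tau := mul_pos hlam htau
  have hs0 : 0 < s := hs ▸ Real.sqrt_pos.2 hlt0
  have hs2 : s ^ 2 = lam * tau := hs ▸ Real.sq_sqrt hlt0.le
  have hs1 : s < 1 := by nlinarith
  have hφ0 : 0 < φ := hφ ▸ Real.sqrt_pos.2 (div_pos htau hlam)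
  have hφs : φ * s = tau := by
    rw [hφ, hs, ← Real.sqrt_mul (by positivity)]
    rw [show tau / lam * (lam * tau) = tau ^ 2 by field_simp]
    exact Real.sqrt_sq htau.le
  have h1s : (1 : ℝ) - s ≠ 0 := by linarith
  have hξ1 : 1 < ξ := by
    rw [hξ, lt_div_iff₀ (by linarith)]
    linarith
  have h1ξ : (1 : ℝ) - ξ ≠ 0 := by linarith
  have hξrel : ξ * (1 - s) = 1 + s := by
    rw [hξ]; field_simp
  -- denominator nonzero
  have hden : ∀ t ≤ T, 1 - ξ * Real.exp (2 * φ * (T - t)) ≠ 0 := by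
    intro t ht
    have he : 1 ≤ Real.exp (2 * φ * (T - t)) :=
      Real.one_le_exp (by nlinarith)
    nlinarith
  refine ⟨hden, ?_, ?_⟩
  · have : 2 * φ * (T - T) = 0 := by ring
    rw [this, Real.exp_zero, mul_one]
    field_simp
    linear_combination -hξrel
  · intro t ht
    have hD := hden t ht
    have hlin : HasDerivAt (fun x : ℝ => 2 * φ * (T - x)) (2 * φ * (-1)) t :=
      ((hasDerivAt_id t).const_sub T).const_mul (2 * φ)
    have hexp : HasDerivAt (fun x : ℝ => Real.exp (2 * φ * (T - x)))
        (Real.exp (2 * φ * (T - t)) * (2 * φ * (-1))) t := hlin.exp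
    have hnum : HasDerivAt (fun x : ℝ => s * (1 + ξ * Real.exp (2 * φ * (T - x))))
        (s * (ξ * (Real.exp (2 * φ * (T - t)) * (2 * φ * (-1))))) t :=
      ((hexp.const_mul ξ).const_add 1).const_mul s
    have hdenD : HasDerivAt (fun x : ℝ => 1 - ξ * Real.exp (2 * φ * (T - x)))
        (-(ξ * (Real.exp (2 * φ * (T - t)) * (2 * φ * (-1))))) t :=
      (hexp.const_mul ξ).const_sub 1
    have hdiv := hnum.div hdenD hD
    have hh := hdiv.const_add (1 : ℝ)
    refine ⟨hh.differentiableAt, ?_⟩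
    rw [HasDerivAt.deriv (f := fun t => 1 + s * (1 + ξ * Real.exp (2 * φ * (T - t))) /
          (1 - ξ * Real.exp (2 * φ * (T - t)))) hh]
    set e := Real.exp (2 * φ * (T - t)) with he
    have he0 : 0 < e := Real.exp_pos _
    field_simp
    linear_combination (-4*lam*ξ*e) * hφs + (1 + ξ*e)^2 * hs2

theorem stmt13 (lam tau T : ℝ) (hlam : 0 < lam) (htau : 0 < tau)
    (hlt : lam * tau < 1) :
    let φ : ℝ := Real.sqrt (tau / lam)
    let ξ : ℝ := (1 + Real.sqrt (lam * tau)) / (1 - Real.sqrt (lam * tau))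
    let h₂ : ℝ → ℝ := fun t =>
      1 + Real.sqrt (lam * tau) * (1 + ξ * Real.exp (2 * φ * (T - t))) /
            (1 - ξ * Real.exp (2 * φ * (T - t)))
    (∀ t ≤ T, 1 - ξ * Real.exp (2 * φ * (T - t)) ≠ 0) ∧
    h₂ T = 0 ∧
    (∀ t ≤ T, DifferentiableAt ℝ h₂ t ∧
      deriv h₂ t + (1 - h₂ t) ^ 2 / lam - tau = 0) := by
  intro φ ξ h₂
  exact stmt13_aux lam tau T φ ξ (Real.sqrt (lam * tau)) hlam htau hlt rfl rfl rfl
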